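/- Every Schur stable matrix is realized by the parameterization: if A₀ ∈ ℝ^{N×N} is Schur stable, then there exist L ∈ ℝ^{2N×2N}, R ∈ ℝ^{N×N}, and ε > 0 such that A₀ = 2(M₁₁ + M₂₂ + R - Rᵀ)⁻¹ M₂₁ with M = LLᵀ + εI. -/

import Mathlib

open Matrix Filter

namespace Stmt16Aux

open scoped ENNReal NNReal

attribute [local instance] Matrix.frobeniusNormedAddCommGroup Matrix.frobeniusNormedSpace
  Matrix.frobeniusNormedRing Matrix.frobeniusNormedAlgebra

variable {n : Type*} [Fintype n] [DecidableEq n]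

lemma posDef_of_posSemidef_det {M : Matrix n n ℝ} (h : M.PosSemidef)
    (hd : IsUnit M.det) : M.PosDef := by
  refine Matrix.PosDef.of_dotProduct_mulVec_pos h.1 fun x hx => ?_
  rcases (h.dotProduct_mulVec_nonneg x).eq_or_lt with heq | hlt
  · exfalso
    have h0 : M *ᵥ x = 0 := (h.dotProduct_mulVec_zero_iff x).mp heq.symm
    have : x = 0 := by
      have := congrArg (fun v => M⁻¹ *ᵥ v) h0
      simpa [Matrix.mulVec_mulVec, Matrix.nonsing_inv_mul _ hd] using this
    exact hx this
  · exact hlt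

lemma exists_eps {M : Matrix n n ℝ} (h : M.PosDef) :
    ∃ ε : ℝ, 0 < ε ∧ (M - ε • 1).PosSemidef := by
  cases isEmpty_or_nonempty n with
  | inl he =>
    refine ⟨1, one_pos, Subsingleton.elim _ _, fun x => ?_⟩
    simp [Finsupp.sum, Finset.eq_empty_of_isEmpty x.support]
  | inr hne =>
    have hH := h.1
    set ε := Finset.univ.inf' Finset.univ_nonempty hH.eigenvalues with hε
    refine ⟨ε, ?_, ?_⟩
    · rw [hε, Finset.lt_inf'_iff]
      exact fun i _ => h.eigenvalues_pos i
    · have hdiag : (Matrix.diagonal (RCLike.ofReal ∘ hH.eigenvalues)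
          - ε • (1 : Matrix n n ℝ)).PosSemidef := by
        have : (Matrix.diagonal (RCLike.ofReal ∘ hH.eigenvalues)
            - ε • (1 : Matrix n n ℝ)) = Matrix.diagonal (fun i => hH.eigenvalues i - ε) := by
          ext i j
          by_cases hij : i = j <;>
            simp [Matrix.sub_apply, Matrix.smul_apply, Matrix.diagonal, Matrix.one_apply, hij]
        rw [this]
        rw [Matrix.posSemidef_diagonal_iff]
        intro i
        simp only [sub_nonneg, hε]
        exact Finset.inf'_le _ (Finset.mem_univ i)
      set U : Matrix n n ℝ := (hH.eigenvectorUnitary : Matrix n n ℝ) with hU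
      have hUU : U * star U = 1 := Unitary.coe_mul_star_self hH.eigenvectorUnitary
      have key : M - ε • (1 : Matrix n n ℝ)
          = U * (Matrix.diagonal (RCLike.ofReal ∘ hH.eigenvalues) - ε • 1) * star U := by
        conv_lhs => rw [hH.spectral_theorem]
        conv_rhs => rw [Matrix.mul_sub, Matrix.sub_mul]
        congr 1
        rw [Matrix.mul_smul, Matrix.mul_one, Matrix.smul_mul, hUU]
      rw [key]
      exact hdiag.mul_mul_conjTranspose_same U

lemma map_pow_ofReal (A : Matrix n n ℝ) (k : ℕ) :
    (A.map Complex.ofReal) ^ k = (A ^ k).map Complex.ofReal := by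
  have h := map_pow (Complex.ofRealHom.mapMatrix (m := n)) A k
  exact h.symm

lemma pow_bound [Nonempty n] (A : Matrix n n ℝ)
    (h : ∀ μ ∈ spectrum ℂ (A.map Complex.ofReal), ‖μ‖ < 1) :
    ∃ r : ℝ, 0 ≤ r ∧ r < 1 ∧ ∀ᶠ k in atTop, ‖A ^ k‖ ≤ r ^ k := by
  set B := A.map Complex.ofReal with hB
  have h1 : spectralRadius ℂ B < 1 := by
    have := spectrum.spectralRadius_lt_of_forall_lt B (r := 1)
      (fun z hz => by simpa [← NNReal.coe_lt_coe] using h z hz)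
    simpa using this
  obtain ⟨r, hr1, hr2⟩ := ENNReal.lt_iff_exists_nnreal_btwn.mp h1
  have h2 := spectrum.pow_nnnorm_pow_one_div_tendsto_nhds_spectralRadius B
  have h3 : ∀ᶠ k in atTop, (‖B ^ k‖₊ : ℝ≥0∞) ^ (1 / (k:ℕ) : ℝ) < (r : ℝ≥0∞) :=
    h2.eventually_lt_const hr1
  refine ⟨r, r.coe_nonneg, by exact_mod_cast hr2, ?_⟩
  filter_upwards [h3, eventually_ge_atTop 1] with k hk hk1
  have hkpos : (0:ℝ) < k := by exact_mod_cast hk1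
  have hlt : (‖B ^ k‖₊ : ℝ≥0∞) < (r : ℝ≥0∞) ^ (k : ℕ) := by
    have := ENNReal.rpow_lt_rpow hk hkpos
    rwa [← ENNReal.rpow_mul, one_div, inv_mul_cancel₀ (by exact_mod_cast hkpos.ne'),
      ENNReal.rpow_one, ENNReal.rpow_natCast] at this
  have hnn : ‖B ^ k‖₊ ≤ r ^ k := by
    have := hlt.le
    rwa [← ENNReal.coe_pow, ENNReal.coe_le_coe] at this
  have heq : ‖A ^ k‖ = ‖B ^ k‖ := by
    rw [hB, map_pow_ofReal]
    exact (Matrix.frobenius_norm_map_eq (A ^ k) Complex.ofReal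
      (fun a => by simp)).symm
  rw [heq]
  calc ‖B ^ k‖ = (‖B ^ k‖₊ : ℝ) := rfl
  _ ≤ ((r ^ k : ℝ≥0) : ℝ) := by exact_mod_cast hnn
  _ = (r:ℝ) ^ k := by push_cast; ring

lemma lyapunov (A : Matrix n n ℝ)
    (hpow : ∃ r : ℝ, 0 ≤ r ∧ r < 1 ∧ ∀ᶠ k in atTop, ‖A ^ k‖ ≤ r ^ k) :
    ∃ P : Matrix n n ℝ, P.PosDef ∧ Aᵀ * P * A = P - 1 := by
  obtain ⟨r, hr0, hr1, hev⟩ := hpow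
  set f : ℕ → Matrix n n ℝ := fun k => (Aᵀ) ^ k * A ^ k with hf
  have hsum : Summable f := by
    refine Summable.of_norm_bounded_eventually_nat (g := fun k => (r * r) ^ k)
      (summable_geometric_of_lt_one (by positivity) (by nlinarith)) ?_
    filter_upwards [hev] with k hk
    calc ‖f k‖ ≤ ‖(Aᵀ) ^ k‖ * ‖A ^ k‖ := norm_mul_le _ _
    _ = ‖A ^ k‖ * ‖A ^ k‖ := by
        rw [← Matrix.transpose_pow, Matrix.frobenius_norm_transpose]
    _ ≤ r ^ k * r ^ k := by
        have h0 : 0 ≤ ‖A ^ k‖ := norm_nonneg _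
        exact mul_le_mul hk hk h0 (by positivity)
    _ = (r * r) ^ k := (mul_pow r r k).symm
  set P : Matrix n n ℝ := ∑' k, f k with hP
  -- transpose as CLM
  let tL : Matrix n n ℝ →ₗ[ℝ] Matrix n n ℝ :=
    { toFun := fun X => Xᵀ
      map_add' := fun X Y => Matrix.transpose_add X Y
      map_smul' := fun c X => Matrix.transpose_smul c X }
  let tCLM : Matrix n n ℝ →L[ℝ] Matrix n n ℝ := LinearMap.toContinuousLinearMap tL
  have hPt : Pᵀ = P := by
    have hmap : tCLM P = ∑' k, tCLM (f k) := tCLM.map_tsum hsum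
    have h1 : tCLM P = Pᵀ := rfl
    have h2 : ∀ k, tCLM (f k) = f k := by
      intro k
      show (f k)ᵀ = f k
      rw [hf]
      simp only [Matrix.transpose_mul, Matrix.transpose_pow, Matrix.transpose_transpose]
    rw [h1] at hmap
    rw [hmap]
    exact tsum_congr h2
  -- conjugation map
  let cL : Matrix n n ℝ →ₗ[ℝ] Matrix n n ℝ :=
    { toFun := fun X => Aᵀ * X * A
      map_add' := fun X Y => by
        simp only [Matrix.mul_add, Matrix.add_mul]
      map_smul' := fun c X => by
        simp only [Matrix.mul_smul, Matrix.smul_mul, RingHom.id_apply] }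
  let cCLM : Matrix n n ℝ →L[ℝ] Matrix n n ℝ := LinearMap.toContinuousLinearMap cL
  have hLyap : Aᵀ * P * A = P - 1 := by
    have hmap : cCLM P = ∑' k, cCLM (f k) := cCLM.map_tsum hsum
    have h2 : ∀ k, cCLM (f k) = f (k + 1) := by
      intro k
      show Aᵀ * f k * A = f (k + 1)
      show Aᵀ * ((Aᵀ) ^ k * A ^ k) * A = (Aᵀ) ^ (k + 1) * A ^ (k + 1)
      rw [pow_succ A k, pow_succ' (Aᵀ) k]
      noncomm_ring
    have h3 : cCLM P = ∑' k, f (k + 1) := by rw [hmap]; exact tsum_congr h2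
    have h4 : P = f 0 + ∑' k, f (k + 1) := hsum.tsum_eq_zero_add
    have h5 : f 0 = 1 := by simp [hf]
    show cCLM P = P - 1
    rw [h3, eq_sub_iff_add_eq']
    rw [h5] at h4
    exact h4.symm
  -- positive definiteness
  have hterm : ∀ (x : n → ℝ) (k : ℕ), x ⬝ᵥ (f k *ᵥ x) = (A ^ k *ᵥ x) ⬝ᵥ (A ^ k *ᵥ x) := by
    intro x k
    rw [hf]
    show x ⬝ᵥ (((Aᵀ) ^ k * A ^ k) *ᵥ x) = _
    rw [← Matrix.mulVec_mulVec, Matrix.dotProduct_mulVec, ← Matrix.transpose_pow,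
      Matrix.vecMul_transpose]
  have hPd : P.PosDef := by
    refine Matrix.PosDef.of_dotProduct_mulVec_pos ?_ ?_
    · show Pᴴ = P
      rw [Matrix.conjTranspose_eq_transpose_of_trivial]
      exact hPt
    · intro x hx
      have hxs : star x = x := by
        funext i
        simp
      rw [hxs]
      let qL : Matrix n n ℝ →ₗ[ℝ] ℝ :=
        { toFun := fun X => x ⬝ᵥ (X *ᵥ x)
          map_add' := fun X Y => by
            simp only [Matrix.add_mulVec, dotProduct_add]
          map_smul' := fun c X => by
            simp only [Matrix.smul_mulVec, dotProduct_smul, RingHom.id_apply,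
              smul_eq_mul] }
      let qCLM : Matrix n n ℝ →L[ℝ] ℝ := LinearMap.toContinuousLinearMap qL
      have hmap : qCLM P = ∑' k, qCLM (f k) := qCLM.map_tsum hsum
      have hsum2 : Summable (fun k => qCLM (f k)) :=
        hsum.map (qCLM : Matrix n n ℝ →L[ℝ] ℝ) qCLM.continuous
      have hnonneg : ∀ k, 0 ≤ qCLM (f k) := by
        intro k
        show 0 ≤ x ⬝ᵥ (f k *ᵥ x)
        rw [hterm x k]
        exact Finset.sum_nonneg fun i _ => mul_self_nonneg _
      have h0 : qCLM (f 0) ≤ ∑' k, qCLM (f k) :=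
        hsum2.le_tsum 0 (fun j _ => hnonneg j)
      have hpos : 0 < qCLM (f 0) := by
        show 0 < x ⬝ᵥ (f 0 *ᵥ x)
        rw [hterm x 0]
        simp only [pow_zero, Matrix.one_mulVec]
        have hne : x ⬝ᵥ x ≠ 0 := fun hc => hx (dotProduct_self_eq_zero.mp hc)
        have hge : 0 ≤ x ⬝ᵥ x := Finset.sum_nonneg fun i _ => mul_self_nonneg _
        exact lt_of_le_of_ne hge (Ne.symm hne)
      show 0 < x ⬝ᵥ (P *ᵥ x)
      calc (0:ℝ) < qCLM (f 0) := hpos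
      _ ≤ ∑' k, qCLM (f k) := h0
      _ = qCLM P := hmap.symm
      _ = x ⬝ᵥ (P *ᵥ x) := rfl
  exact ⟨P, hPd, hLyap⟩

end Stmt16Aux

open Stmt16Aux

open scoped MatrixOrder

def SchurStable {N : ℕ} (A : Matrix (Fin N) (Fin N) ℝ) : Prop :=
  ∀ μ ∈ spectrum ℂ (A.map Complex.ofReal), ‖μ‖ < 1

theorem stmt16 {N : ℕ} (A₀ : Matrix (Fin N) (Fin N) ℝ) (hA₀ : SchurStable A₀) :
    ∃ (L : Matrix (Fin N ⊕ Fin N) (Fin N ⊕ Fin N) ℝ)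
      (R : Matrix (Fin N) (Fin N) ℝ) (ε : ℝ), 0 < ε ∧
      A₀ = (2 : ℝ) •
        ((((L * Lᵀ + ε • (1 : Matrix (Fin N ⊕ Fin N) (Fin N ⊕ Fin N) ℝ)).toBlocks₁₁ +
            (L * Lᵀ + ε • (1 : Matrix (Fin N ⊕ Fin N) (Fin N ⊕ Fin N) ℝ)).toBlocks₂₂ +
            R - Rᵀ)⁻¹) *
          (L * Lᵀ + ε • (1 : Matrix (Fin N ⊕ Fin N) (Fin N ⊕ Fin N) ℝ)).toBlocks₂₁) := by
  rcases Nat.eq_zero_or_pos N with hN | hN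
  · subst hN
    exact ⟨0, 0, 1, one_pos, Subsingleton.elim _ _⟩
  haveI : Nonempty (Fin N) := ⟨⟨0, hN⟩⟩
  obtain ⟨P, hPd, hLyap⟩ := lyapunov A₀ (pow_bound A₀ hA₀)
  have hPdet : IsUnit P.det := hPd.det_pos.ne'.isUnit
  haveI : Invertible P := P.invertibleOfIsUnitDet hPdet
  have hPherm : Pᴴ = P := hPd.1
  -- the block matrix
  set B : Matrix (Fin N) (Fin N) ℝ := (P * A₀)ᴴ with hB
  set M' : Matrix (Fin N ⊕ Fin N) (Fin N ⊕ Fin N) ℝ := fromBlocks P B Bᴴ P with hM'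
  have hschur : P - B * P⁻¹ * Bᴴ = 1 := by
    have h1 : B * P⁻¹ * Bᴴ = A₀ᵀ * P * A₀ := by
      rw [hB, Matrix.conjTranspose_conjTranspose, Matrix.conjTranspose_mul, hPherm,
        Matrix.conjTranspose_eq_transpose_of_trivial]
      calc A₀ᵀ * P * P⁻¹ * (P * A₀) = A₀ᵀ * (P * P⁻¹ * P) * A₀ := by noncomm_ring
      _ = A₀ᵀ * P * A₀ := by rw [Matrix.mul_nonsing_inv _ hPdet, Matrix.one_mul]
    rw [h1, hLyap]
    abel
  have hM'psd : M'.PosSemidef := by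
    rw [hM']
    exact (Matrix.PosDef.fromBlocks₂₂ P B hPd).mpr (hschur ▸ Matrix.PosSemidef.one)
  have hM'det : IsUnit M'.det := by
    rw [hM', Matrix.det_fromBlocks₂₂, Matrix.invOf_eq_nonsing_inv, hschur, Matrix.det_one,
      mul_one]
    exact hPdet
  have hM'pd : M'.PosDef := posDef_of_posSemidef_det hM'psd hM'det
  obtain ⟨ε, hε, hPSD⟩ := exists_eps hM'pd
  set L := CFC.sqrt (M' - ε • 1) with hL
  have hLt : Lᵀ = L := by
    rw [← Matrix.conjTranspose_eq_transpose_of_trivial]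
    exact (Matrix.nonneg_iff_posSemidef.mp (CFC.sqrt_nonneg _)).1
  have hLL : L * Lᵀ + ε • (1 : Matrix (Fin N ⊕ Fin N) (Fin N ⊕ Fin N) ℝ) = M' := by
    rw [hLt, hL, CFC.sqrt_mul_sqrt_self _ hPSD.nonneg, sub_add_cancel]
  refine ⟨L, 0, ε, hε, ?_⟩
  rw [hLL, hM']
  rw [Matrix.toBlocks_fromBlocks₁₁, Matrix.toBlocks_fromBlocks₂₂, Matrix.toBlocks_fromBlocks₂₁,
    Matrix.transpose_zero, hB, Matrix.conjTranspose_conjTranspose]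
  have hPP : IsUnit (P + P).det := by
    have : (P + P).PosDef := hPd.add_posSemidef hPd.posSemidef
    exact this.det_pos.ne'.isUnit
  have : (P + P + 0 - 0 : Matrix (Fin N) (Fin N) ℝ) = P + P := by abel
  rw [this]
  calc A₀ = (P + P)⁻¹ * ((P + P) * A₀) := by
        rw [← Matrix.mul_assoc, Matrix.nonsing_inv_mul _ hPP, Matrix.one_mul]
  _ = (P + P)⁻¹ * ((2:ℝ) • (P * A₀)) := by rw [two_smul, Matrix.add_mul]
  _ = (2:ℝ) • ((P + P)⁻¹ * (P * A₀)) := by rw [Matrix.mul_smul]
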